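/- Let Φ and h be as in the canonical construction with d = 1 + rλ + sλ′, let Υ be a clause minimum prime pure Horn CNF representation of h, and define the labelings f_j from Υ as in the construction. Then for each index j ∈ [t], the labeling f_j is a tight total-cover of the refined Label Cover instance L. -/

import Mathlib

open Finset

/-- A clause, given by its (fin)sets of positive and negative variables. -/
structure Clause (V : Type*) where
  pos : Finset V
  neg : Finset V
deriving DecidableEq

namespace Clause

variable {V : Type*}

/-- A genuine clause: no variable occurs both positively and negatively. -/
def IsClause (C : Clause V) : Prop := Disjoint C.pos C.neg

/-- Evaluation of a clause (as a disjunction of literals) under an assignment. -/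
def eval (C : Clause V) (a : V → Bool) : Prop :=
  (∃ v ∈ C.pos, a v = true) ∨ (∃ v ∈ C.neg, a v = false)

/-- A pure (definite) Horn clause: exactly one positive literal, its head. -/
def IsPureHorn (C : Clause V) : Prop := ∃ v, C.pos = {v}

end Clause

variable {V : Type*}

/-- Conjunction (as a predicate on assignments) of a set of clauses. -/
def evalSet (S : Set (Clause V)) (a : V → Bool) : Prop := ∀ C ∈ S, C.eval a

/-- Conjunction of the clauses of a CNF, i.e. of a finite set of clauses. -/
def evalCNF (Φ : Finset (Clause V)) (a : V → Bool) : Prop := ∀ C ∈ Φ, C.eval a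

/-- A CNF represents a Boolean function `h`. -/
def Represents (Φ : Finset (Clause V)) (h : (V → Bool) → Prop) : Prop :=
  ∀ a, evalCNF Φ a ↔ h a

/-- A pure Horn CNF: all clauses are pure Horn. -/
def IsPureHornCNF (Φ : Finset (Clause V)) : Prop :=
  ∀ C ∈ Φ, C.IsClause ∧ C.IsPureHorn

/-- The forward chaining closure of a set `Q` of variables with respect to the
pure Horn CNF `Φ`: the smallest set containing `Q` such that whenever `Φ` contains
a clause `S → v` with `S` inside the set, also `v` belongs to it. -/
def fcClosure (Φ : Finset (Clause V)) (Q : Set V) : Set V :=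
  ⋂₀ {T : Set V | Q ⊆ T ∧ ∀ C ∈ Φ, ∀ v : V, C.pos = {v} → ↑C.neg ⊆ T → v ∈ T}

/-- `C` is an implicate of `h`: every assignment falsifying `C` falsifies `h`. -/
def Implicate (h : (V → Bool) → Prop) (C : Clause V) : Prop :=
  ∀ a, ¬ C.eval a → ¬ h a

/-- `C` is a prime implicate of `h`: an implicate from which no literal can be
deleted while remaining an implicate. -/
def PrimeImplicate [DecidableEq V] (h : (V → Bool) → Prop) (C : Clause V) : Prop :=
  C.IsClause ∧ Implicate h C ∧
  (∀ v ∈ C.pos, ¬ Implicate h ⟨C.pos.erase v, C.neg⟩) ∧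
  (∀ v ∈ C.neg, ¬ Implicate h ⟨C.pos, C.neg.erase v⟩)

/-- `C₁` and `C₂` are resolvable on `v`: `v` occurs positively in `C₁`, negatively in
`C₂`, and no other variable occurs with opposite signs in them. -/
def Resolvable (C₁ C₂ : Clause V) (v : V) : Prop :=
  v ∈ C₁.pos ∧ v ∈ C₂.neg ∧
  ∀ w, w ≠ v → ¬(w ∈ C₁.pos ∧ w ∈ C₂.neg) ∧ ¬(w ∈ C₁.neg ∧ w ∈ C₂.pos)

/-- The resolvent `R(C₁,C₂) = (C₁ \ {v}) ∪ (C₂ \ {v̄})`. -/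
def resolventOf [DecidableEq V] (C₁ C₂ : Clause V) (v : V) : Clause V :=
  ⟨C₁.pos.erase v ∪ C₂.pos, C₁.neg ∪ C₂.neg.erase v⟩

/-- A set of clauses closed under resolution. -/
def ResClosed [DecidableEq V] (S : Set (Clause V)) : Prop :=
  ∀ C₁ ∈ S, ∀ C₂ ∈ S, ∀ v, Resolvable C₁ C₂ v → resolventOf C₁ C₂ v ∈ S

/-- The resolution closure of a set of clauses. -/
def resClosure [DecidableEq V] (S : Set (Clause V)) : Set (Clause V) :=
  ⋂₀ {T : Set (Clause V) | S ⊆ T ∧ ResClosed T}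

/-- `I(h)`: the resolution closure of the set of prime implicates of `h`. -/
def implSet [DecidableEq V] (h : (V → Bool) → Prop) : Set (Clause V) :=
  resClosure {C | PrimeImplicate h C}

/-- An exclusive set of clauses of `h`. -/
def ExclusiveSet [DecidableEq V] (h : (V → Bool) → Prop) (Xs : Set (Clause V)) : Prop :=
  Xs ⊆ implSet h ∧
  ∀ C₁ ∈ implSet h, ∀ C₂ ∈ implSet h, ∀ v, Resolvable C₁ C₂ v →
    resolventOf C₁ C₂ v ∈ Xs → C₁ ∈ Xs ∧ C₂ ∈ Xs

/-- The set of variables occurring in a CNF. -/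
def varsOf [DecidableEq V] (Φ : Finset (Clause V)) : Finset V :=
  Φ.biUnion fun C => C.pos ∪ C.neg


/-- A Label Cover instance: a bipartite graph with parts `X` and `Y` and edge set `E`,
label sets `A` (for `X`-vertices) and `B` (for `Y`-vertices), and a nonempty
constraint relation `cst e ⊆ A × B` for every edge `e ∈ E`. -/
structure LabelCover (X Y A B : Type*) where
  E : Finset (X × Y)
  cst : X × Y → Finset (A × B)
  cst_nonempty : ∀ e ∈ E, (cst e).Nonempty

namespace LabelCover

variable {X Y A B : Type*}

/-- A labeling `(f, g)` covers an edge `(x,y)` if for every label `b ∈ g y` there is a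
label `a ∈ f x` with `(a, b)` admissible for the edge. -/
def Covers (I : LabelCover X Y A B) (f : X → Finset A) (g : Y → Finset B)
    (e : X × Y) : Prop :=
  ∀ b ∈ g e.2, ∃ a ∈ f e.1, (a, b) ∈ I.cst e

/-- A total-cover: a labeling (assigning a nonempty label set to every `Y`-vertex)
covering every edge. -/
def IsTotalCover (I : LabelCover X Y A B) (f : X → Finset A) (g : Y → Finset B) : Prop :=
  (∀ y, (g y).Nonempty) ∧ ∀ e ∈ I.E, I.Covers f g e

/-- A total-cover is tight if every `Y`-vertex receives exactly one label. -/
def Tight (g : Y → Finset B) : Prop := ∀ y, (g y).card = 1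

end LabelCover

/-- The cost of a labeling: the average number of labels assigned to `X`-vertices. -/
def lcCost {X A : Type*} [Fintype X] (f : X → Finset A) : ℚ :=
  (∑ x, ((f x).card : ℚ)) / (Fintype.card X : ℚ)


/-- The labels of the refined Label Cover instance: `L ∪ L′`, where `L = ⋃_x L_x`
with `L_x = {x} × A` and `L′ = ⋃_y L′_y` with `L′_y = {y} × B`. -/
abbrev Lab (X Y A B : Type*) := (X × A) ⊕ (Y × B)

/-- The propositional variables of the canonical pure Horn CNF construction:
`u ℓ` for labels `ℓ ∈ L ∪ L′`, `e x y i` and `el x y ℓ′ i` for edges `(x,y)`,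
labels `ℓ′ ∈ L′_y` and indices `i ∈ [d]`, and `v j` for `j ∈ [t]`. -/
inductive PV (X Y A B : Type*) where
  | u : Lab X Y A B → PV X Y A B
  | e : X → Y → ℕ → PV X Y A B
  | el : X → Y → B → ℕ → PV X Y A B
  | v : ℕ → PV X Y A B
deriving DecidableEq

section Canonical

variable {X Y A B : Type*} [Fintype X] [Fintype Y] [Fintype A] [Fintype B]
  [DecidableEq X] [DecidableEq Y] [DecidableEq A] [DecidableEq B]

/-- The (open) neighborhood `N(y) = {z ∈ X : (z,y) ∈ E}`. -/
def Nbr (I : LabelCover X Y A B) (y : Y) : Finset X :=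
  Finset.univ.filter fun z => (z, y) ∈ I.E

/-- Clauses (a): `u(ℓ) ∧ u(ℓ′) → e(x,y,ℓ′,i)` for `(x,y) ∈ E`, `(ℓ,ℓ′) ∈ Π_{(x,y)}`,
`i ∈ [d]`. -/
def clA (I : LabelCover X Y A B) (d : ℕ) : Finset (Clause (PV X Y A B)) :=
  (I.E ×ˢ Finset.Icc 1 d).biUnion fun p =>
    (I.cst p.1).image fun ab =>
      ⟨{PV.el p.1.1 p.1.2 ab.2 p.2},
       {PV.u (Sum.inl (p.1.1, ab.1)), PV.u (Sum.inr (p.1.2, ab.2))}⟩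

/-- Clauses (b): `⋀_{z ∈ N(y)} e(z,y,ℓ′,i) → e(x,y,i)` for `(x,y) ∈ E`, `ℓ′ ∈ L′_y`,
`i ∈ [d]`. -/
def clB (I : LabelCover X Y A B) (d : ℕ) : Finset (Clause (PV X Y A B)) :=
  ((I.E ×ˢ (Finset.univ : Finset B)) ×ˢ Finset.Icc 1 d).image fun p =>
    ⟨{PV.e p.1.1.1 p.1.1.2 p.2},
     (Nbr I p.1.1.2).image fun z => PV.el z p.1.1.2 p.1.2 p.2⟩

/-- Clauses (c): `e(x,y,i) → e(x,y,ℓ′,i)` for `(x,y) ∈ E`, `ℓ′ ∈ L′_y`, `i ∈ [d]`. -/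
def clC (I : LabelCover X Y A B) (d : ℕ) : Finset (Clause (PV X Y A B)) :=
  ((I.E ×ˢ (Finset.univ : Finset B)) ×ˢ Finset.Icc 1 d).image fun p =>
    ⟨{PV.el p.1.1.1 p.1.1.2 p.1.2 p.2}, {PV.e p.1.1.1 p.1.1.2 p.2}⟩

/-- The common body of the clauses (d): all variables `e(x,y,i)`, `(x,y) ∈ E`, `i ∈ [d]`. -/
def bigBody (I : LabelCover X Y A B) (d : ℕ) : Finset (PV X Y A B) :=
  (I.E ×ˢ Finset.Icc 1 d).image fun p => PV.e p.1.1 p.1.2 p.2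

/-- Clauses (d): `⋀_{i ∈ [d]} ⋀_{(x,y) ∈ E} e(x,y,i) → u(ℓ)` for `ℓ ∈ L ∪ L′`. -/
def clD (I : LabelCover X Y A B) (d : ℕ) : Finset (Clause (PV X Y A B)) :=
  (Finset.univ : Finset (Lab X Y A B)).image fun ℓ => ⟨{PV.u ℓ}, bigBody I d⟩

/-- Clauses (e): `v(j) → u(ℓ)` for `j ∈ [t]`, `ℓ ∈ L ∪ L′`. -/
def clE (X Y A B : Type*) [Fintype X] [Fintype Y] [Fintype A] [Fintype B]
    [DecidableEq X] [DecidableEq Y] [DecidableEq A] [DecidableEq B]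
    (t : ℕ) : Finset (Clause (PV X Y A B)) :=
  (Finset.Icc 1 t ×ˢ (Finset.univ : Finset (Lab X Y A B))).image fun p =>
    ⟨{PV.u p.2}, {PV.v p.1}⟩

/-- The canonical formula `Ψ`: clauses of types (a)–(d). -/
def PsiCNF (I : LabelCover X Y A B) (d : ℕ) : Finset (Clause (PV X Y A B)) :=
  clA I d ∪ clB I d ∪ clC I d ∪ clD I d

/-- The canonical formula `Φ`: clauses of types (a)–(e). -/
def PhiCNF (I : LabelCover X Y A B) (d t : ℕ) : Finset (Clause (PV X Y A B)) :=
  PsiCNF I d ∪ clE X Y A B t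

/-- The pure Horn function `h` represented by the canonical formula `Φ`. -/
def hFun (I : LabelCover X Y A B) (d t : ℕ) : (PV X Y A B → Bool) → Prop :=
  fun a => evalCNF (PhiCNF I d t) a

/-- The pure Horn function `g` represented by the canonical formula `Ψ`. -/
def gFun (I : LabelCover X Y A B) (d : ℕ) : (PV X Y A B → Bool) → Prop :=
  fun a => evalCNF (PsiCNF I d) a

end Canonical


/-- The `X`-side labeling extracted from a representation `Υ` of `h`:
`f_j(x) = S_j ∩ L_x`, where `S_j` is the set of labels `ℓ` such that the clause
`v(j) → u(ℓ)` belongs to `Υ`. -/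
def fjX {X Y A B : Type*} [Fintype X] [Fintype Y] [Fintype A] [Fintype B]
    [DecidableEq X] [DecidableEq Y] [DecidableEq A] [DecidableEq B]
    (Υ : Finset (Clause (PV X Y A B))) (j : ℕ) (x : X) : Finset A :=
  Finset.univ.filter fun a =>
    (⟨{PV.u (Sum.inl (x, a))}, {PV.v j}⟩ : Clause (PV X Y A B)) ∈ Υ

/-- The `Y`-side labeling extracted from a representation `Υ` of `h`:
`f_j(y) = S_j ∩ L′_y`, where `S_j` is the set of labels `ℓ` such that the clause
`v(j) → u(ℓ)` belongs to `Υ`. -/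
def fjY {X Y A B : Type*} [Fintype X] [Fintype Y] [Fintype A] [Fintype B]
    [DecidableEq X] [DecidableEq Y] [DecidableEq A] [DecidableEq B]
    (Υ : Finset (Clause (PV X Y A B))) (j : ℕ) (y : Y) : Finset B :=
  Finset.univ.filter fun b =>
    (⟨{PV.u (Sum.inr (y, b))}, {PV.v j}⟩ : Clause (PV X Y A B)) ∈ Υ
section Aux

open Finset
set_option maxHeartbeats 1000000

variable {X Y A B : Type*} [Fintype X] [Fintype Y] [Fintype A] [Fintype B]
  [DecidableEq X] [DecidableEq Y] [DecidableEq A] [DecidableEq B]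

section FCgen
variable {V : Type*} {Φ : Finset (Clause V)} {Q T : Set V}

/-- A set is `Φ`-closed. -/
def FcClosed (Φ : Finset (Clause V)) (T : Set V) : Prop :=
  ∀ C ∈ Φ, ∀ v : V, C.pos = {v} → ↑C.neg ⊆ T → v ∈ T

lemma subset_fc : Q ⊆ fcClosure Φ Q := fun w hw =>
  Set.mem_sInter.2 fun _ hT => hT.1 hw

lemma fc_closed : FcClosed Φ (fcClosure Φ Q) := fun C hC v hv hneg =>
  Set.mem_sInter.2 fun T hT =>
    hT.2 C hC v hv (hneg.trans (Set.sInter_subset_of_mem hT))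

lemma fc_min (h1 : Q ⊆ T) (h2 : FcClosed Φ T) : fcClosure Φ Q ⊆ T :=
  Set.sInter_subset_of_mem ⟨h1, h2⟩

lemma fc_mono {Q'} (h : Q ⊆ Q') : fcClosure Φ Q ⊆ fcClosure Φ Q' :=
  fc_min (h.trans subset_fc) fc_closed

lemma fc_fire {C : Clause V} {w : V} (hC : C ∈ Φ) (hpos : C.pos = {w})
    (hneg : ↑C.neg ⊆ fcClosure Φ Q) : w ∈ fcClosure Φ Q :=
  fc_closed C hC w hpos hneg

lemma fc_trans {Q' : Set V} (h : Q' ⊆ fcClosure Φ Q) :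
    fcClosure Φ Q' ⊆ fcClosure Φ Q :=
  fc_min h fc_closed

/-- The true-set of a satisfying assignment is closed. -/
lemma trueset_closed {a : V → Bool} (ha : evalCNF Φ a) :
    FcClosed Φ {v | a v = true} := by
  intro C hC v hv hneg
  rcases ha C hC with ⟨w, hw, hwt⟩ | ⟨w, hw, hwf⟩
  · rw [hv, Finset.mem_singleton] at hw; subst hw; exact hwt
  · exact absurd (hneg hw) (by simp [hwf])

/-- Fundamental: implicates of `h` correspond to fc-membership, for any
pure Horn representation of `h`. -/
lemma implicate_iff_fc {h : (V → Bool) → Prop} (hPH : IsPureHornCNF Φ)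
    (hrep : Represents Φ h) (B : Finset V) (w : V) :
    Implicate h ⟨{w}, B⟩ ↔ w ∈ fcClosure Φ ↑B := by
  classical
  constructor
  · intro him
    by_contra hw
    have ha : evalCNF Φ (fun v => if v ∈ fcClosure Φ ↑B then true else false) := by
      intro C hC
      obtain ⟨v, hv⟩ := (hPH C hC).2
      by_cases hn : ↑C.neg ⊆ fcClosure Φ ↑B
      · exact Or.inl ⟨v, by simp [hv], by simp [fc_fire hC hv hn]⟩
      · obtain ⟨z, hz⟩ := Set.not_subset.1 hn
        exact Or.inr ⟨z, hz.1, by simp [hz.2]⟩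
    refine him _ ?_ ((hrep _).1 ha)
    rintro (⟨v, hv, hvt⟩ | ⟨v, hv, hvf⟩)
    · rw [Finset.mem_singleton] at hv; subst hv; simp [hw] at hvt
    · have : (v : V) ∈ fcClosure Φ (↑B : Set V) := subset_fc hv
      simp [this] at hvf
  · intro hw a hne ha
    have hB : ∀ v ∈ B, a v = true := by
      intro v hv
      by_contra hvf
      exact hne (Or.inr ⟨v, hv, by simpa using hvf⟩)
    have : fcClosure Φ ↑B ⊆ {v | a v = true} :=
      fc_min (fun v hv => hB v hv) (trueset_closed ((hrep a).2 ha))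
    exact hne (Or.inl ⟨w, Finset.mem_singleton_self w, this hw⟩)

/-- fc-closures of finsets agree across pure Horn representations. -/
lemma fc_eq_of_reps {h : (V → Bool) → Prop} {Φ₁ Φ₂ : Finset (Clause V)}
    (h1 : IsPureHornCNF Φ₁) (r1 : Represents Φ₁ h)
    (h2 : IsPureHornCNF Φ₂) (r2 : Represents Φ₂ h) (B : Finset V) (w : V) :
    w ∈ fcClosure Φ₁ ↑B ↔ w ∈ fcClosure Φ₂ ↑B := by
  rw [← implicate_iff_fc h1 r1, implicate_iff_fc h2 r2]

/-- Criterion for representing a function given by a CNF. -/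
lemma represents_of_criterion {Φ₀ Ψ : Finset (Clause V)}
    (h0 : IsPureHornCNF Φ₀) (hPH : IsPureHornCNF Ψ)
    (himp : ∀ C ∈ Ψ, Implicate (fun a => evalCNF Φ₀ a) C)
    (hch : ∀ C ∈ Φ₀, ∀ w, C.pos = {w} → w ∈ fcClosure Ψ ↑C.neg) :
    Represents Ψ (fun a => evalCNF Φ₀ a) := by
  intro a
  constructor
  · intro ha C hC
    obtain ⟨w, hw⟩ := (h0 C hC).2
    by_cases hn : ∀ v ∈ C.neg, a v = true
    · have hsub : fcClosure Ψ ↑C.neg ⊆ {v | a v = true} :=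
        fc_min (fun v hv => hn v hv) (trueset_closed ha)
      exact Or.inl ⟨w, by simp [hw], hsub (hch C hC w hw)⟩
    · push_neg at hn
      obtain ⟨z, hz, hzf⟩ := hn
      exact Or.inr ⟨z, hz, by simpa using hzf⟩
  · intro ha C hC
    by_contra hne
    exact himp C hC a hne ha

end FCgen



section FCgen2
variable {V : Type*}

lemma fc_subset_heads {Φ : Finset (Clause V)} (Q : Set V) :
    fcClosure Φ Q ⊆ Q ∪ {w | ∃ C ∈ Φ, C.pos = {w}} :=
  fc_min Set.subset_union_left (fun C hC w hpos _ => Or.inr ⟨C, hC, hpos⟩)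

end FCgen2
end Aux
section Aux2
open Finset
variable {X Y A B : Type*} [Fintype X] [Fintype Y] [Fintype A] [Fintype B]
  [DecidableEq X] [DecidableEq Y] [DecidableEq A] [DecidableEq B]
variable {I : LabelCover X Y A B} {d t : ℕ}

lemma mem_clA_iff {C : Clause (PV X Y A B)} :
    C ∈ clA I d ↔ ∃ x y i a b, ((x, y) ∈ I.E ∧ 1 ≤ i ∧ i ≤ d) ∧ (a, b) ∈ I.cst (x, y) ∧
      C = ⟨{PV.el x y b i}, {PV.u (Sum.inl (x, a)), PV.u (Sum.inr (y, b))}⟩ := by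
  simp only [clA, Finset.mem_biUnion, Finset.mem_product, Finset.mem_image, Finset.mem_Icc,
    Prod.exists]
  constructor
  · rintro ⟨x, y, i, hp, a, b, hab, rfl⟩; exact ⟨x, y, i, a, b, hp, hab, rfl⟩
  · rintro ⟨x, y, i, a, b, hp, hab, rfl⟩; exact ⟨x, y, i, hp, a, b, hab, rfl⟩

lemma mem_clB_iff {C : Clause (PV X Y A B)} :
    C ∈ clB I d ↔ ∃ x y b i, ((x, y) ∈ I.E ∧ 1 ≤ i ∧ i ≤ d) ∧
      C = ⟨{PV.e x y i}, (Nbr I y).image fun z => PV.el z y b i⟩ := by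
  simp only [clB, Finset.mem_image, Finset.mem_product, Finset.mem_Icc, Prod.exists]
  constructor
  · rintro ⟨x, y, b, i, ⟨⟨hE, -⟩, hi⟩, rfl⟩; exact ⟨x, y, b, i, ⟨hE, hi⟩, rfl⟩
  · rintro ⟨x, y, b, i, ⟨hE, hi⟩, rfl⟩
    exact ⟨x, y, b, i, ⟨⟨hE, Finset.mem_univ b⟩, hi⟩, rfl⟩

lemma mem_clC_iff {C : Clause (PV X Y A B)} :
    C ∈ clC I d ↔ ∃ x y b i, ((x, y) ∈ I.E ∧ 1 ≤ i ∧ i ≤ d) ∧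
      C = ⟨{PV.el x y b i}, {PV.e x y i}⟩ := by
  simp only [clC, Finset.mem_image, Finset.mem_product, Finset.mem_Icc, Prod.exists]
  constructor
  · rintro ⟨x, y, b, i, ⟨⟨hE, -⟩, hi⟩, rfl⟩; exact ⟨x, y, b, i, ⟨hE, hi⟩, rfl⟩
  · rintro ⟨x, y, b, i, ⟨hE, hi⟩, rfl⟩
    exact ⟨x, y, b, i, ⟨⟨hE, Finset.mem_univ b⟩, hi⟩, rfl⟩

lemma mem_clD_iff {C : Clause (PV X Y A B)} :
    C ∈ clD I d ↔ ∃ ℓ : Lab X Y A B, C = ⟨{PV.u ℓ}, bigBody I d⟩ := by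
  simp only [clD, Finset.mem_image, Finset.mem_univ, true_and]
  exact ⟨fun ⟨ℓ, h⟩ => ⟨ℓ, h.symm⟩, fun ⟨ℓ, h⟩ => ⟨ℓ, h.symm⟩⟩

lemma mem_clE_iff {C : Clause (PV X Y A B)} :
    C ∈ clE X Y A B t ↔ ∃ j ℓ, (1 ≤ j ∧ j ≤ t) ∧ C = ⟨{PV.u ℓ}, {PV.v j}⟩ := by
  simp only [clE, Finset.mem_image, Finset.mem_product, Finset.mem_Icc, Finset.mem_univ,
    and_true, Prod.exists]
  exact ⟨fun ⟨j, ℓ, hj, h⟩ => ⟨j, ℓ, hj, h.symm⟩, fun ⟨j, ℓ, hj, h⟩ => ⟨j, ℓ, hj, h.symm⟩⟩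

lemma mem_bigBody_iff {w : PV X Y A B} :
    w ∈ bigBody I d ↔ ∃ x y i, (x, y) ∈ I.E ∧ 1 ≤ i ∧ i ≤ d ∧ w = PV.e x y i := by
  simp only [bigBody, Finset.mem_image, Finset.mem_product, Finset.mem_Icc, Prod.exists]
  constructor
  · rintro ⟨x, y, i, ⟨hE, hi1, hi2⟩, rfl⟩; exact ⟨x, y, i, hE, hi1, hi2, rfl⟩
  · rintro ⟨x, y, i, hE, hi1, hi2, rfl⟩; exact ⟨x, y, i, ⟨hE, hi1, hi2⟩, rfl⟩

lemma mem_PhiCNF_elim {C : Clause (PV X Y A B)} (hC : C ∈ PhiCNF I d t) :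
    (∃ x y i a b, ((x, y) ∈ I.E ∧ 1 ≤ i ∧ i ≤ d) ∧ (a, b) ∈ I.cst (x, y) ∧
      C = ⟨{PV.el x y b i}, {PV.u (Sum.inl (x, a)), PV.u (Sum.inr (y, b))}⟩) ∨
    (∃ x y b i, ((x, y) ∈ I.E ∧ 1 ≤ i ∧ i ≤ d) ∧
      C = ⟨{PV.e x y i}, (Nbr I y).image fun z => PV.el z y b i⟩) ∨
    (∃ x y b i, ((x, y) ∈ I.E ∧ 1 ≤ i ∧ i ≤ d) ∧
      C = ⟨{PV.el x y b i}, {PV.e x y i}⟩) ∨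
    (∃ ℓ : Lab X Y A B, C = ⟨{PV.u ℓ}, bigBody I d⟩) ∨
    (∃ j ℓ, (1 ≤ j ∧ j ≤ t) ∧ C = ⟨{PV.u ℓ}, {PV.v j}⟩) := by
  simp only [PhiCNF, PsiCNF, Finset.mem_union] at hC
  rcases hC with (((h | h) | h) | h) | h
  · exact Or.inl (mem_clA_iff.1 h)
  · exact Or.inr (Or.inl (mem_clB_iff.1 h))
  · exact Or.inr (Or.inr (Or.inl (mem_clC_iff.1 h)))
  · exact Or.inr (Or.inr (Or.inr (Or.inl (mem_clD_iff.1 h))))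
  · exact Or.inr (Or.inr (Or.inr (Or.inr (mem_clE_iff.1 h))))

lemma clA_mem_Phi {x y a b i} (hE : (x, y) ∈ I.E) (hab : (a, b) ∈ I.cst (x, y))
    (hi1 : 1 ≤ i) (hi2 : i ≤ d) :
    (⟨{PV.el x y b i}, {PV.u (Sum.inl (x, a)), PV.u (Sum.inr (y, b))}⟩ :
      Clause (PV X Y A B)) ∈ PhiCNF I d t := by
  simp only [PhiCNF, PsiCNF, Finset.mem_union]
  exact Or.inl (Or.inl (Or.inl (Or.inl (mem_clA_iff.2 ⟨x, y, i, a, b, ⟨hE, hi1, hi2⟩, hab, rfl⟩))))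

lemma clB_mem_Phi {x y i} (b : B) (hE : (x, y) ∈ I.E) (hi1 : 1 ≤ i) (hi2 : i ≤ d) :
    (⟨{PV.e x y i}, (Nbr I y).image fun z => PV.el z y b i⟩ :
      Clause (PV X Y A B)) ∈ PhiCNF I d t := by
  simp only [PhiCNF, PsiCNF, Finset.mem_union]
  exact Or.inl (Or.inl (Or.inl (Or.inr (mem_clB_iff.2 ⟨x, y, b, i, ⟨hE, hi1, hi2⟩, rfl⟩))))

lemma clC_mem_Phi {x y i} (b : B) (hE : (x, y) ∈ I.E) (hi1 : 1 ≤ i) (hi2 : i ≤ d) :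
    (⟨{PV.el x y b i}, {PV.e x y i}⟩ : Clause (PV X Y A B)) ∈ PhiCNF I d t := by
  simp only [PhiCNF, PsiCNF, Finset.mem_union]
  exact Or.inl (Or.inl (Or.inr (mem_clC_iff.2 ⟨x, y, b, i, ⟨hE, hi1, hi2⟩, rfl⟩)))

lemma clD_mem_Phi (ℓ : Lab X Y A B) :
    (⟨{PV.u ℓ}, bigBody I d⟩ : Clause (PV X Y A B)) ∈ PhiCNF I d t := by
  simp only [PhiCNF, PsiCNF, Finset.mem_union]
  exact Or.inl (Or.inr (mem_clD_iff.2 ⟨ℓ, rfl⟩))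

lemma clE_mem_Phi {j} (ℓ : Lab X Y A B) (hj1 : 1 ≤ j) (hj2 : j ≤ t) :
    (⟨{PV.u ℓ}, {PV.v j}⟩ : Clause (PV X Y A B)) ∈ PhiCNF I d t := by
  simp only [PhiCNF, PsiCNF, Finset.mem_union]
  exact Or.inr (mem_clE_iff.2 ⟨j, ℓ, ⟨hj1, hj2⟩, rfl⟩)

lemma phi_pureHorn : IsPureHornCNF (PhiCNF I d t) := by
  intro C hC
  rcases mem_PhiCNF_elim hC with ⟨x, y, i, a, b, _, _, rfl⟩ | ⟨x, y, b, i, _, rfl⟩ |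
    ⟨x, y, b, i, _, rfl⟩ | ⟨ℓ, rfl⟩ | ⟨j, ℓ, _, rfl⟩
  · refine ⟨?_, _, rfl⟩
    simp [Clause.IsClause, Finset.disjoint_left]
  · refine ⟨?_, _, rfl⟩
    simp only [Clause.IsClause, Finset.disjoint_left, Finset.mem_singleton, Finset.mem_image]
    rintro w rfl ⟨z, -, h⟩; exact nomatch h
  · refine ⟨?_, _, rfl⟩
    simp [Clause.IsClause, Finset.disjoint_left]
  · refine ⟨?_, _, rfl⟩
    simp only [Clause.IsClause, Finset.disjoint_left, Finset.mem_singleton]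
    rintro w rfl hw
    rcases mem_bigBody_iff.1 hw with ⟨_, _, _, _, _, _, h⟩; exact nomatch h
  · refine ⟨?_, _, rfl⟩
    simp [Clause.IsClause, Finset.disjoint_left]

lemma phi_represents : Represents (PhiCNF I d t) (hFun I d t) := fun _ => Iff.rfl

end Aux2
section Aux3
open Finset
set_option linter.unusedVariables false
set_option linter.unusedSectionVars false
variable {X Y A B : Type*} [Fintype X] [Fintype Y] [Fintype A] [Fintype B]
  [DecidableEq X] [DecidableEq Y] [DecidableEq A] [DecidableEq B]
variable {I : LabelCover X Y A B} {d t : ℕ}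

/-- The possible heads of the canonical CNF. -/
def IsHd (I : LabelCover X Y A B) (d : ℕ) : PV X Y A B → Prop
  | PV.u _ => True
  | PV.e x y i => (x, y) ∈ I.E ∧ 1 ≤ i ∧ i ≤ d
  | PV.el x y _ i => (x, y) ∈ I.E ∧ 1 ≤ i ∧ i ≤ d
  | PV.v _ => False

lemma head_isHd {C : Clause (PV X Y A B)} {w} (hC : C ∈ PhiCNF I d t)
    (hpos : C.pos = {w}) : IsHd I d w := by
  rcases mem_PhiCNF_elim hC with ⟨x, y, i, a, b, hp, _, rfl⟩ | ⟨x, y, b, i, hp, rfl⟩ |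
    ⟨x, y, b, i, hp, rfl⟩ | ⟨ℓ, rfl⟩ | ⟨j, ℓ, _, rfl⟩ <;>
    simp only [Finset.singleton_inj] at hpos <;> subst hpos
  · exact hp
  · exact hp
  · exact hp
  · trivial
  · trivial

lemma fc_subset_hd (Q : Set (PV X Y A B)) :
    fcClosure (PhiCNF I d t) Q ⊆ Q ∪ {w | IsHd I d w} :=
  fc_min Set.subset_union_left
    (fun C hC w hpos _ => Or.inr (head_isHd hC hpos))

lemma mem_Nbr {z y} : z ∈ Nbr I y ↔ (z, y) ∈ I.E := by
  simp [Nbr]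

/-- From `e(x,y,i)` we get all `el(x,y,b,i)` (clause (c)). -/
lemma derive_el {Q : Set (PV X Y A B)} {x y i} (b : B) (hE : (x, y) ∈ I.E)
    (hi1 : 1 ≤ i) (hi2 : i ≤ d)
    (he : PV.e x y i ∈ fcClosure (PhiCNF I d t) Q) :
    PV.el x y b i ∈ fcClosure (PhiCNF I d t) Q := by
  refine fc_fire (clC_mem_Phi b hE hi1 hi2) rfl ?_
  intro w hw
  simp only [Finset.coe_singleton, Set.mem_singleton_iff] at hw
  subst hw; exact he

/-- The support condition needed to reach `e(x,y,i)` for an edge. -/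
def GoodFor (I : LabelCover X Y A B) (Q : Set (PV X Y A B)) (y : Y) (b : B) : Prop :=
  PV.u (Sum.inr (y, b)) ∈ Q ∧
    ∀ z ∈ Nbr I y, ∃ a, PV.u (Sum.inl (z, a)) ∈ Q ∧ (a, b) ∈ I.cst (z, y)

lemma derive_e {Q : Set (PV X Y A B)} {x y i} (hE : (x, y) ∈ I.E)
    (hi1 : 1 ≤ i) (hi2 : i ≤ d)
    (hg : ∃ b, GoodFor I (fcClosure (PhiCNF I d t) Q) y b) :
    PV.e x y i ∈ fcClosure (PhiCNF I d t : Finset (Clause (PV X Y A B))) Q := by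
  obtain ⟨b, hb, hall⟩ := hg
  refine fc_fire (clB_mem_Phi b hE hi1 hi2) rfl ?_
  intro w hw
  simp only [Finset.coe_image, Set.mem_image, Finset.mem_coe] at hw
  obtain ⟨z, hz, rfl⟩ := hw
  obtain ⟨a, ha, hab⟩ := hall z hz
  refine fc_fire (clA_mem_Phi (mem_Nbr.1 hz) hab hi1 hi2) rfl ?_
  intro w hw
  simp only [Finset.coe_insert, Finset.coe_singleton, Set.mem_insert_iff,
    Set.mem_singleton_iff] at hw
  rcases hw with rfl | rfl
  · exact ha
  · exact hb

/-- If every `Y`-vertex has a good label in the closure of `Q`, then all `u`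
variables (and hence all head variables) are in the closure of `Q`. -/
lemma derive_all_u {Q : Set (PV X Y A B)}
    (hQ : ∀ y, (∃ x, (x, y) ∈ I.E) → ∃ b, GoodFor I (fcClosure (PhiCNF I d t) Q) y b) :
    ∀ ℓ : Lab X Y A B, PV.u ℓ ∈ fcClosure (PhiCNF I d t) Q := by
  intro ℓ
  refine fc_fire (clD_mem_Phi ℓ) rfl ?_
  intro w hw
  rw [Finset.mem_coe, mem_bigBody_iff] at hw
  obtain ⟨x, y, i, hE, hi1, hi2, rfl⟩ := hw
  exact derive_e hE hi1 hi2 (hQ y ⟨x, hE⟩)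

lemma derive_all_hd {Q : Set (PV X Y A B)}
    (hQ : ∀ y, (∃ x, (x, y) ∈ I.E) → ∃ b, GoodFor I (fcClosure (PhiCNF I d t) Q) y b) :
    ∀ w, IsHd I d w → w ∈ fcClosure (PhiCNF I d t) Q := by
  intro w hw
  match w, hw with
  | PV.u ℓ, _ => exact derive_all_u hQ ℓ
  | PV.e x y i, ⟨hE, hi1, hi2⟩ => exact derive_e hE hi1 hi2 (hQ y ⟨x, hE⟩)
  | PV.el x y b i, ⟨hE, hi1, hi2⟩ =>
    exact derive_el b hE hi1 hi2 (derive_e hE hi1 hi2 (hQ y ⟨x, hE⟩))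

/-- A feasible total cover gives the good-label condition once all `u`'s are present. -/
lemma feas_good {Q : Set (PV X Y A B)} (hfeas : ∃ f g, I.IsTotalCover f g)
    (hu : ∀ ℓ : Lab X Y A B, PV.u ℓ ∈ Q) :
    ∀ y, ∃ b, GoodFor I Q y b := by
  obtain ⟨f, g, hne, hcov⟩ := hfeas
  intro y
  obtain ⟨b, hb⟩ := hne y
  refine ⟨b, hu _, fun z hz => ?_⟩
  obtain ⟨a, ha, hab⟩ := hcov (z, y) (mem_Nbr.1 hz) b hb
  exact ⟨a, hu _, hab⟩

/-- Everything reachable from `{v j}` for `j ∈ [t]`. -/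
lemma vj_derives_hd (hfeas : ∃ f g, I.IsTotalCover f g) {j} (hj1 : 1 ≤ j) (hj2 : j ≤ t) :
    ∀ w, IsHd I d w → w ∈ fcClosure (PhiCNF I d t) {PV.v j} := by
  have hu : ∀ ℓ : Lab X Y A B, PV.u ℓ ∈ fcClosure (PhiCNF I d t) {PV.v j} := by
    intro ℓ
    refine fc_fire (clE_mem_Phi ℓ hj1 hj2) rfl ?_
    simp [subset_fc (Set.mem_singleton _)]
  exact derive_all_hd (fun y _ => feas_good ⟨_, _, ‹∃ f g, I.IsTotalCover f g›.choose_spec.choose_spec⟩ hu y)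

end Aux3
section Aux4
open Finset
set_option linter.unusedVariables false
set_option linter.unusedSectionVars false
variable {X Y A B : Type*} [Fintype X] [Fintype Y] [Fintype A] [Fintype B]
  [DecidableEq X] [DecidableEq Y] [DecidableEq A] [DecidableEq B]
variable {I : LabelCover X Y A B} {d t : ℕ}

def swIdx (i i' k : ℕ) : ℕ := if k = i then i' else if k = i' then i else k

def swPV (i i' : ℕ) : PV X Y A B → PV X Y A B
  | PV.e x y k => PV.e x y (swIdx i i' k)
  | PV.el x y b k => PV.el x y b (swIdx i i' k)
  | PV.u ℓ => PV.u ℓ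
  | PV.v j => PV.v j

lemma swIdx_invol {i i' k : ℕ} : swIdx i i' (swIdx i i' k) = k := by
  unfold swIdx; split_ifs <;> omega

lemma swIdx_bounds {i i' k : ℕ} (h1 : 1 ≤ i) (h2 : i ≤ d) (h1' : 1 ≤ i') (h2' : i' ≤ d)
    (hk1 : 1 ≤ k) (hk2 : k ≤ d) : 1 ≤ swIdx i i' k ∧ swIdx i i' k ≤ d := by
  unfold swIdx; split_ifs <;> omega

/-- Mapping a closure along a clause-set endomorphism. -/
lemma fc_image_subset {V : Type*} [DecidableEq V] {Φ : Finset (Clause V)} {σ : V → V}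
    (hσ : ∀ C ∈ Φ, (⟨C.pos.image σ, C.neg.image σ⟩ : Clause V) ∈ Φ) (Q : Set V) :
    ∀ w ∈ fcClosure Φ Q, σ w ∈ fcClosure Φ (σ '' Q) := by
  have : fcClosure Φ Q ⊆ {w | σ w ∈ fcClosure Φ (σ '' Q)} := by
    refine fc_min (fun w hw => subset_fc (Set.mem_image_of_mem σ hw)) ?_
    intro C hC w hpos hneg
    refine fc_fire (Φ := Φ) (hσ C hC) ?_ ?_
    · rw [hpos, Finset.image_singleton]
    · intro z hz
      simp only [Finset.coe_image, Set.mem_image, Finset.mem_coe] at hz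
      obtain ⟨z', hz', rfl⟩ := hz
      exact hneg hz'
  exact fun w hw => this hw

lemma bigBody_image_swap {i i' : ℕ} (h1 : 1 ≤ i) (h2 : i ≤ d) (h1' : 1 ≤ i') (h2' : i' ≤ d) :
    (bigBody I d).image (swPV i i') = bigBody I d := by
  apply Finset.Subset.antisymm
  · intro w hw
    obtain ⟨z, hz, rfl⟩ := Finset.mem_image.1 hw
    obtain ⟨x, y, k, hE, hk1, hk2, rfl⟩ := mem_bigBody_iff.1 hz
    obtain ⟨hb1, hb2⟩ := swIdx_bounds (d := d) h1 h2 h1' h2' hk1 hk2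
    exact mem_bigBody_iff.2 ⟨x, y, _, hE, hb1, hb2, rfl⟩
  · intro w hw
    obtain ⟨x, y, k, hE, hk1, hk2, rfl⟩ := mem_bigBody_iff.1 hw
    obtain ⟨hb1, hb2⟩ := swIdx_bounds (d := d) h1 h2 h1' h2' hk1 hk2
    refine Finset.mem_image.2 ⟨PV.e x y (swIdx i i' k),
      mem_bigBody_iff.2 ⟨x, y, _, hE, hb1, hb2, rfl⟩, ?_⟩
    simp [swPV, swIdx_invol]

lemma phi_swap_mem {i i' : ℕ} (h1 : 1 ≤ i) (h2 : i ≤ d) (h1' : 1 ≤ i') (h2' : i' ≤ d) :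
    ∀ C ∈ PhiCNF I d t,
      (⟨C.pos.image (swPV i i'), C.neg.image (swPV i i')⟩ : Clause (PV X Y A B)) ∈
        PhiCNF I d t := by
  intro C hC
  rcases mem_PhiCNF_elim hC with ⟨x, y, k, a, b, ⟨hE, hk1, hk2⟩, hab, rfl⟩ |
    ⟨x, y, b, k, ⟨hE, hk1, hk2⟩, rfl⟩ | ⟨x, y, b, k, ⟨hE, hk1, hk2⟩, rfl⟩ |
    ⟨ℓ, rfl⟩ | ⟨j, ℓ, ⟨hj1, hj2⟩, rfl⟩
  · obtain ⟨hb1, hb2⟩ := swIdx_bounds (d := d) h1 h2 h1' h2' hk1 hk2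
    simpa [Finset.image_singleton, Finset.image_insert, swPV] using
      clA_mem_Phi (t := t) hE hab hb1 hb2
  · obtain ⟨hb1, hb2⟩ := swIdx_bounds (d := d) h1 h2 h1' h2' hk1 hk2
    have := clB_mem_Phi (I := I) (d := d) (t := t) (i := swIdx i i' k) b hE hb1 hb2
    simpa [Finset.image_singleton, Finset.image_image, swPV, Function.comp_def] using this
  · obtain ⟨hb1, hb2⟩ := swIdx_bounds (d := d) h1 h2 h1' h2' hk1 hk2
    simpa [Finset.image_singleton, Finset.image_insert, swPV] using
      clC_mem_Phi (t := t) b hE hb1 hb2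
  · have := clD_mem_Phi (I := I) (d := d) (t := t) ℓ
    simpa [Finset.image_singleton, swPV, bigBody_image_swap h1 h2 h1' h2'] using this
  · simpa [Finset.image_singleton, swPV] using clE_mem_Phi (I := I) (d := d) ℓ hj1 hj2

/-- Layer symmetry: for a set of `u`-variables, derivability of `e(x,y,i)` is
independent of the layer `i`. -/
lemma fc_swap_layer {U : Set (PV X Y A B)} (hU : ∀ w ∈ U, ∃ ℓ, w = PV.u ℓ)
    {x y} {i i' : ℕ} (h1 : 1 ≤ i) (h2 : i ≤ d) (h1' : 1 ≤ i') (h2' : i' ≤ d)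
    (he : PV.e x y i ∈ fcClosure (PhiCNF I d t) U) :
    PV.e x y i' ∈ fcClosure (PhiCNF I d t) U := by
  have himg : swPV i i' '' U = U := by
    have : ∀ w ∈ U, swPV i i' w = w := by
      intro w hw; obtain ⟨ℓ, rfl⟩ := hU w hw; rfl
    rw [Set.image_congr this]; exact Set.image_id U
  have := fc_image_subset (phi_swap_mem (I := I) (t := t) h1 h2 h1' h2') U _ he
  rw [himg] at this
  simpa [swPV, swIdx] using this
end Aux4
section Aux5
open Finset
set_option linter.unusedVariables false
set_option linter.unusedSectionVars false
set_option maxHeartbeats 1000000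
variable {X Y A B : Type*} [Fintype X] [Fintype Y] [Fintype A] [Fintype B]
  [DecidableEq X] [DecidableEq Y] [DecidableEq A] [DecidableEq B]

def isU : PV X Y A B → Bool
  | PV.u _ => true
  | _ => false

lemma isU_iff {w : PV X Y A B} : isU w = true ↔ ∃ ℓ, w = PV.u ℓ := by
  cases w <;> simp [isU]

/-- Heads of clauses of `Υ` with body `{v j}`. -/
def HJ (Υ : Finset (Clause (PV X Y A B))) (j : ℕ) : Finset (PV X Y A B) :=
  (Υ.filter fun C => C.neg = {PV.v j}).biUnion Clause.pos

/-- The `u`-variables among them. -/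
def UJ (Υ : Finset (Clause (PV X Y A B))) (j : ℕ) : Finset (PV X Y A B) :=
  (HJ Υ j).filter fun w => isU w

variable {I : LabelCover X Y A B} {d t : ℕ} {Υ : Finset (Clause (PV X Y A B))} {j : ℕ}

lemma mem_HJ (hPH : IsPureHornCNF Υ) {w : PV X Y A B} :
    w ∈ HJ Υ j ↔ (⟨{w}, {PV.v j}⟩ : Clause (PV X Y A B)) ∈ Υ := by
  constructor
  · intro hw
    obtain ⟨C, hC, hwC⟩ := Finset.mem_biUnion.1 hw
    obtain ⟨hCY, hneg⟩ := Finset.mem_filter.1 hC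
    obtain ⟨w', hw'⟩ := (hPH C hCY).2
    rw [hw', Finset.mem_singleton] at hwC
    subst hwC
    have : C = ⟨{w}, {PV.v j}⟩ := by
      cases C; simp_all
    rwa [← this]
  · intro hw
    exact Finset.mem_biUnion.2 ⟨_, Finset.mem_filter.2 ⟨hw, rfl⟩, Finset.mem_singleton_self w⟩

section Main
variable (hPH : IsPureHornCNF Υ)
  (hprime : ∀ C ∈ Υ, PrimeImplicate (hFun I d t) C)
  (hrep : Represents Υ (hFun I d t))

include hPH hprime hrep

/-- Heads of clauses of `Υ` are head variables of the canonical CNF. -/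
lemma ups_head_hd {C : Clause (PV X Y A B)} {w} (hC : C ∈ Υ) (hpos : C.pos = {w}) :
    IsHd I d w := by
  have heta : C = ⟨{w}, C.neg⟩ := by cases C; simp_all
  have himp : Implicate (hFun I d t) ⟨{w}, C.neg⟩ := by
    rw [← heta]; exact (hprime C hC).2.1
  have hfc : w ∈ fcClosure (PhiCNF I d t) ↑C.neg :=
    (implicate_iff_fc phi_pureHorn phi_represents C.neg w).1 himp
  rcases fc_subset_hd _ hfc with hw | hw
  · exact absurd hw (by
      have hdisj := (hprime C hC).1
      rw [Clause.IsClause, Finset.disjoint_left] at hdisj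
      exact fun h => hdisj (hpos ▸ Finset.mem_singleton_self w) h)
  · exact hw

lemma ups_head_not_v {C : Clause (PV X Y A B)} {w} (hC : C ∈ Υ) (hpos : C.pos = {w}) :
    ∀ j', w ≠ PV.v j' := by
  intro j' h
  have := ups_head_hd (I := I) (d := d) (t := t) hPH hprime hrep hC hpos
  rw [h] at this
  exact this

lemma HJ_hd {w : PV X Y A B} (hw : w ∈ HJ Υ j) : IsHd I d w := by
  have h := (mem_HJ hPH).1 hw
  exact ups_head_hd hPH hprime hrep h rfl

/-- Step 1: any clause of `Υ` whose body contains `v j` has body exactly `{v j}`. -/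
lemma step1 (hfeas : ∃ f g, I.IsTotalCover f g) (hj1 : 1 ≤ j) (hj2 : j ≤ t)
    {C : Clause (PV X Y A B)} (hC : C ∈ Υ) (hv : PV.v j ∈ C.neg) :
    C.neg = {PV.v j} := by
  obtain ⟨w, hpos⟩ := (hPH C hC).2
  have hhd : IsHd I d w := ups_head_hd hPH hprime hrep hC hpos
  have hwv : w ∈ fcClosure (PhiCNF I d t) {PV.v j} :=
    vj_derives_hd hfeas hj1 hj2 w hhd
  rw [Finset.eq_singleton_iff_unique_mem]
  refine ⟨hv, fun z hz => ?_⟩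
  by_contra hne
  refine (hprime C hC).2.2.2 z hz ?_
  have heta : (⟨C.pos, C.neg.erase z⟩ : Clause (PV X Y A B)) = ⟨{w}, C.neg.erase z⟩ := by
    rw [hpos]
  rw [heta]
  refine (implicate_iff_fc phi_pureHorn phi_represents (C.neg.erase z) w).2 ?_
  refine fc_mono ?_ hwv
  intro z' hz'
  rw [Set.mem_singleton_iff] at hz'
  subst hz'
  exact Finset.mem_coe.2 (Finset.mem_erase.2 ⟨Ne.symm hne, hv⟩)

/-- Closure transfer between `Υ` and the canonical CNF. -/
lemma fc_ups_eq (Bs : Finset (PV X Y A B)) (w : PV X Y A B) :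
    w ∈ fcClosure Υ ↑Bs ↔ w ∈ fcClosure (PhiCNF I d t) ↑Bs :=
  fc_eq_of_reps hPH hrep phi_pureHorn phi_represents Bs w

/-- Step 2: all `u`-variables are derivable from the heads `HJ`. -/
lemma step2 (hfeas : ∃ f g, I.IsTotalCover f g) (hj1 : 1 ≤ j) (hj2 : j ≤ t) :
    ∀ ℓ : Lab X Y A B, PV.u ℓ ∈ fcClosure (PhiCNF I d t) ↑(HJ Υ j) := by
  intro ℓ
  have h1 : PV.u ℓ ∈ fcClosure Υ ↑({PV.v j} : Finset (PV X Y A B)) := by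
    rw [fc_ups_eq hPH hprime hrep]
    rw [Finset.coe_singleton]
    exact vj_derives_hd hfeas hj1 hj2 _ trivial
  have hT : fcClosure Υ ↑({PV.v j} : Finset (PV X Y A B)) ⊆
      {PV.v j} ∪ fcClosure Υ ↑(HJ Υ j) := by
    refine fc_min (by simp) ?_
    intro C hC w hpos hneg
    by_cases hv : PV.v j ∈ C.neg
    · have hnegeq := step1 hPH hprime hrep hfeas hj1 hj2 hC hv
      have hwHJ : w ∈ HJ Υ j := by
        rw [mem_HJ hPH]
        have : C = ⟨{w}, {PV.v j}⟩ := by cases C; simp_all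
        rwa [← this]
      exact Or.inr (subset_fc (Finset.mem_coe.2 hwHJ))
    · refine Or.inr (fc_fire hC hpos ?_)
      intro z hz
      rcases hneg hz with h | h
      · rw [Set.mem_singleton_iff] at h; subst h; exact absurd hz hv
      · exact h
  rcases hT h1 with h | h
  · exact absurd h (by simp)
  · rwa [fc_ups_eq hPH hprime hrep] at h

end Main
end Aux5
section Aux6
open Finset
set_option linter.unusedVariables false
set_option linter.unusedSectionVars false
set_option maxHeartbeats 1600000
variable {X Y A B : Type*} [Fintype X] [Fintype Y] [Fintype A] [Fintype B]
  [DecidableEq X] [DecidableEq Y] [DecidableEq A] [DecidableEq B]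
variable {I : LabelCover X Y A B} {d t : ℕ} {Υ : Finset (Clause (PV X Y A B))} {j : ℕ}

/-- Removing/replacing the clauses with body `{v j}` does not affect closures of
`v j`-free sets. -/
lemma fc_sub_aux {Υ' : Finset (Clause (PV X Y A B))}
    (hkeep : ∀ C ∈ Υ, C.neg ≠ {PV.v j} → C ∈ Υ')
    (hnoV : ∀ C ∈ Υ', ∀ w, C.pos = {w} → ∀ j', w ≠ PV.v j')
    (Q : Set (PV X Y A B)) (hQ : PV.v j ∉ Q) :
    fcClosure Υ Q ⊆ fcClosure Υ' Q := by
  refine fc_min subset_fc ?_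
  intro C hC w hpos hneg
  by_cases hn : C.neg = {PV.v j}
  · exfalso
    have hvj : PV.v j ∈ fcClosure Υ' Q := hneg (by simp [hn])
    rcases fc_subset_heads Q hvj with h | ⟨C', hC', hposC'⟩
    · exact hQ h
    · exact hnoV C' hC' _ hposC' j rfl

  · exact fc_fire (hkeep C hC hn) hpos hneg

section Main2
variable (hPH : IsPureHornCNF Υ)
  (hprime : ∀ C ∈ Υ, PrimeImplicate (hFun I d t) C)
  (hrep : Represents Υ (hFun I d t))
  (hfeas : ∃ f g, I.IsTotalCover f g)
  (hj1 : 1 ≤ j) (hj2 : j ≤ t)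
include hPH hprime hrep hfeas hj1 hj2

lemma UJ_u : ∀ w ∈ (↑(UJ Υ j) : Set (PV X Y A B)), ∃ ℓ, w = PV.u ℓ := by
  intro w hw
  exact isU_iff.1 (Finset.mem_filter.1 (Finset.mem_coe.1 hw)).2

/-- Step 3: all `u`-variables are derivable from the `u`-heads `UJ` alone,
assuming clause minimality. -/
lemma step3
    (hd : d = 1 + Fintype.card X * Fintype.card A + Fintype.card Y * Fintype.card B)
    (hmin : ∀ Υ' : Finset (Clause (PV X Y A B)), IsPureHornCNF Υ' →
      Represents Υ' (hFun I d t) → Υ.card ≤ Υ'.card) :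
    ∀ ℓ : Lab X Y A B, PV.u ℓ ∈ fcClosure (PhiCNF I d t) ↑(UJ Υ j) := by
  classical
  by_contra hn
  push_neg at hn
  obtain ⟨ℓ₀, hℓ₀⟩ := hn
  -- every layer i is hit by a head of HJ
  have layers : ∀ i, 1 ≤ i → i ≤ d →
      ∃ w ∈ HJ Υ j, ∃ x y, w = PV.e x y i ∨ ∃ b, w = PV.el x y b i := by
    intro i hi1 hi2
    by_contra hni
    push_neg at hni
    set F := fcClosure (PhiCNF I d t) (↑(UJ Υ j) : Set (PV X Y A B)) with hF
    set T : Set (PV X Y A B) :=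
      F ∪ {w | ∃ x y k, k ≠ i ∧ (w = PV.e x y k ∨ ∃ b, w = PV.el x y b k)} with hTdef
    have u_in_T : ∀ ℓ : Lab X Y A B, PV.u ℓ ∈ T → PV.u ℓ ∈ F := by
      rintro ℓ (h | ⟨x, y, k, hk, (h | ⟨b, h⟩)⟩)
      · exact h
      · exact nomatch h
      · exact nomatch h
    have e_in_T : ∀ x y, PV.e x y i ∈ T → PV.e x y i ∈ F := by
      rintro x y (h | ⟨x', y', k, hk, (h | ⟨b, h⟩)⟩)
      · exact h
      · injection h with h1 h2 h3; omega
      · exact nomatch h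
    have el_in_T : ∀ x y b, PV.el x y b i ∈ T → PV.el x y b i ∈ F := by
      rintro x y b (h | ⟨x', y', k, hk, (h | ⟨b', h⟩)⟩)
      · exact h
      · exact nomatch h
      · injection h with h1 h2 h3 h4; omega
    have hHT : (↑(HJ Υ j) : Set (PV X Y A B)) ⊆ T := by
      intro w hw
      have hw' := Finset.mem_coe.1 hw
      have hhd := HJ_hd (I := I) (d := d) (t := t) hPH hprime hrep hw'
      match w, hhd with
      | PV.u ℓ, _ =>
        exact Or.inl (subset_fc (Finset.mem_coe.2 (Finset.mem_filter.2 ⟨hw', rfl⟩)))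
      | PV.e x y k, _ =>
        refine Or.inr ⟨x, y, k, ?_, Or.inl rfl⟩
        intro hk; subst hk
        exact (hni _ hw' x y).1 rfl
      | PV.el x y b k, _ =>
        refine Or.inr ⟨x, y, k, ?_, Or.inr ⟨b, rfl⟩⟩
        intro hk; subst hk
        exact (hni _ hw' x y).2 b rfl
    have hclosed : FcClosed (PhiCNF I d t) T := by
      intro C hC w hpos hneg
      rcases mem_PhiCNF_elim hC with ⟨x, y, k, a, b, ⟨hE, hk1, hk2⟩, hab, rfl⟩ |
        ⟨x, y, b, k, ⟨hE, hk1, hk2⟩, rfl⟩ | ⟨x, y, b, k, ⟨hE, hk1, hk2⟩, rfl⟩ |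
        ⟨ℓ, rfl⟩ | ⟨j', ℓ, ⟨hj1', hj2'⟩, rfl⟩ <;>
        simp only [Finset.singleton_inj] at hpos <;> subst hpos
      · -- clause (a)
        by_cases hk : k = i
        · subst hk
          have h1 : PV.u (Sum.inl (x, a)) ∈ F := u_in_T _ (hneg (by simp))
          have h2 : PV.u (Sum.inr (y, b)) ∈ F := u_in_T _ (hneg (by simp))
          refine Or.inl (fc_fire (clA_mem_Phi hE hab hk1 hk2) rfl ?_)
          intro z hz
          simp only [Finset.coe_insert, Finset.coe_singleton, Set.mem_insert_iff,
            Set.mem_singleton_iff] at hz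
          rcases hz with rfl | rfl
          · exact h1
          · exact h2
        · exact Or.inr ⟨x, y, k, hk, Or.inr ⟨b, rfl⟩⟩
      · -- clause (b)
        by_cases hk : k = i
        · subst hk
          refine Or.inl (fc_fire (clB_mem_Phi b hE hk1 hk2) rfl ?_)
          intro z hz
          simp only [Finset.coe_image, Set.mem_image, Finset.mem_coe] at hz
          obtain ⟨z', hz', rfl⟩ := hz
          exact el_in_T _ _ _ (hneg (by
            simp only [Finset.mem_coe, Finset.mem_image]
            exact ⟨z', hz', rfl⟩))
        · exact Or.inr ⟨x, y, k, hk, Or.inl rfl⟩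
      · -- clause (c)
        by_cases hk : k = i
        · subst hk
          have h1 : PV.e x y k ∈ F := e_in_T _ _ (hneg (by simp))
          refine Or.inl (fc_fire (clC_mem_Phi b hE hk1 hk2) rfl ?_)
          intro z hz
          simp only [Finset.coe_singleton, Set.mem_singleton_iff] at hz
          subst hz; exact h1
        · exact Or.inr ⟨x, y, k, hk, Or.inr ⟨b, rfl⟩⟩
      · -- clause (d)
        have hAll : ∀ p ∈ bigBody I d, p ∈ F := by
          intro p hp
          obtain ⟨x, y, k, hE, hk1, hk2, rfl⟩ := mem_bigBody_iff.1 hp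
          have hei : PV.e x y i ∈ F := by
            refine e_in_T x y (hneg ?_)
            exact Finset.mem_coe.2 (mem_bigBody_iff.2 ⟨x, y, i, hE, hi1, hi2, rfl⟩)
          exact fc_swap_layer (UJ_u hPH hprime hrep hfeas hj1 hj2) hi1 hi2 hk1 hk2 hei
        refine Or.inl (fc_fire (clD_mem_Phi ℓ) rfl ?_)
        intro z hz
        exact hAll z (Finset.mem_coe.1 hz)
      · -- clause (e)
        exfalso
        have hvT : PV.v j' ∈ T := hneg (by simp)
        rcases hvT with h | ⟨x, y, k, hk, (h | ⟨b, h⟩)⟩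
        · rcases fc_subset_hd _ h with h' | h'
          · have := (Finset.mem_filter.1 (Finset.mem_coe.1 h')).2
            simp [isU] at this
          · exact h'
        · exact nomatch h
        · exact nomatch h
    -- conclude contradiction with hℓ₀
    have hsub : fcClosure (PhiCNF I d t) ↑(HJ Υ j) ⊆ T := fc_min hHT hclosed
    have := hsub (step2 hPH hprime hrep hfeas hj1 hj2 ℓ₀)
    exact hℓ₀ (u_in_T _ this)
  -- counting
  have hskolem : ∀ i : ℕ, ∃ w, 1 ≤ i → i ≤ d →
      w ∈ HJ Υ j ∧ ∃ x y, w = PV.e x y i ∨ ∃ b, w = PV.el x y b i := by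
    intro i
    by_cases hi : 1 ≤ i ∧ i ≤ d
    · obtain ⟨w, hw, hsh⟩ := layers i hi.1 hi.2
      exact ⟨w, fun _ _ => ⟨hw, hsh⟩⟩
    · exact ⟨PV.v 0, fun h1 h2 => absurd ⟨h1, h2⟩ hi⟩
  choose f hf using hskolem
  have hcard1 : d ≤ (Υ.filter fun C => C.neg = {PV.v j}).card := by
    have := Finset.card_le_card_of_injOn
      (s := Finset.Icc 1 d) (t := Υ.filter fun C => C.neg = {PV.v j})
      (f := fun i => (⟨{f i}, {PV.v j}⟩ : Clause (PV X Y A B)))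
      (fun i hi => by
        rw [Finset.mem_coe, Finset.mem_Icc] at hi
        obtain ⟨hw, -⟩ := hf i hi.1 hi.2
        exact Finset.mem_filter.2 ⟨(mem_HJ hPH).1 hw, by simp⟩)
      (fun i hi i' hi' heq => by
        rw [Finset.mem_coe, Finset.mem_Icc] at hi hi'
        obtain ⟨-, x, y, hsh⟩ := hf i hi.1 hi.2
        obtain ⟨-, x', y', hsh'⟩ := hf i' hi'.1 hi'.2
        have hfe : f i = f i' := by
          have := congrArg Clause.pos heq
          simpa using this
        rw [hfe] at hsh
        rcases hsh with h | ⟨b, h⟩ <;> rcases hsh' with h' | ⟨b', h'⟩ <;>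
          rw [h'] at h <;> first
          | (injection h with _ _ h3; omega)
          | exact nomatch h
          | (injection h with _ _ _ h4; omega))
    simpa [Nat.card_Icc] using this
  -- the replacement CNF
  set Υ' : Finset (Clause (PV X Y A B)) :=
    (Υ.filter fun C => ¬(C.neg = {PV.v j})) ∪
      (Finset.univ : Finset (Lab X Y A B)).image
        (fun ℓ => ⟨{PV.u ℓ}, {PV.v j}⟩) with hΥ'
  have hPH' : IsPureHornCNF Υ' := by
    intro C hC
    rcases Finset.mem_union.1 hC with h | h
    · exact hPH C (Finset.mem_filter.1 h).1
    · obtain ⟨ℓ, -, rfl⟩ := Finset.mem_image.1 h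
      exact ⟨by simp [Clause.IsClause], _, rfl⟩
  have hnoV' : ∀ C ∈ Υ', ∀ w, C.pos = {w} → ∀ j', w ≠ PV.v j' := by
    intro C hC w hpos j'
    rcases Finset.mem_union.1 hC with h | h
    · exact ups_head_not_v hPH hprime hrep (Finset.mem_filter.1 h).1 hpos j'
    · obtain ⟨ℓ, -, rfl⟩ := Finset.mem_image.1 h
      simp only [Finset.singleton_inj] at hpos
      subst hpos
      exact fun h => nomatch h
  have hkeep : ∀ C ∈ Υ, C.neg ≠ {PV.v j} → C ∈ Υ' := fun C hC hn =>
    Finset.mem_union_left _ (Finset.mem_filter.2 ⟨hC, hn⟩)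
  have hrep' : Represents Υ' (hFun I d t) := by
    refine represents_of_criterion phi_pureHorn hPH' ?_ ?_
    · intro C hC
      rcases Finset.mem_union.1 hC with h | h
      · exact (hprime C (Finset.mem_filter.1 h).1).2.1
      · obtain ⟨ℓ, -, rfl⟩ := Finset.mem_image.1 h
        refine (implicate_iff_fc phi_pureHorn phi_represents _ _).2 ?_
        rw [Finset.coe_singleton]
        exact vj_derives_hd hfeas hj1 hj2 _ trivial
    · intro C hC w hpos
      have hW : w ∈ fcClosure Υ ↑C.neg := by
        refine (implicate_iff_fc hPH hrep C.neg w).1 ?_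
        have heta : (⟨{w}, C.neg⟩ : Clause (PV X Y A B)) = C := by
          cases C; simp_all
        rw [heta]
        exact fun a hne ha => hne (ha C hC)
      rcases mem_PhiCNF_elim hC with ⟨x, y, k, a, b, hk, hab, rfl⟩ |
        ⟨x, y, b, k, hk, rfl⟩ | ⟨x, y, b, k, hk, rfl⟩ | ⟨ℓ, rfl⟩ |
        ⟨j', ℓ, ⟨hj1', hj2'⟩, rfl⟩
      · refine fc_sub_aux hkeep hnoV' _ ?_ hW
        simp
      · refine fc_sub_aux hkeep hnoV' _ ?_ hW
        simp only [Finset.coe_image, Set.mem_image, Finset.mem_coe]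
        rintro ⟨z, -, h⟩; exact nomatch h
      · refine fc_sub_aux hkeep hnoV' _ ?_ hW
        simp
      · refine fc_sub_aux hkeep hnoV' _ ?_ hW
        intro h
        rcases mem_bigBody_iff.1 (Finset.mem_coe.1 h) with ⟨_, _, _, _, _, _, h'⟩
        exact nomatch h'
      · by_cases hjj : j' = j
        · subst hjj
          simp only [Finset.singleton_inj] at hpos
          subst hpos
          refine fc_fire (Finset.mem_union_right _
            (Finset.mem_image.2 ⟨ℓ, Finset.mem_univ _, rfl⟩)) rfl ?_
          exact subset_fc
        · refine fc_sub_aux hkeep hnoV' _ ?_ hW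
          simp only [Finset.coe_singleton, Set.mem_singleton_iff]
          intro h
          injection h with h'
          exact hjj h'.symm
  -- cardinality contradiction
  have hcard2 : Υ'.card < Υ.card := by
    rw [hΥ']
    have h1 := Finset.card_union_le
      (Υ.filter fun C => ¬(C.neg = {PV.v j}))
      ((Finset.univ : Finset (Lab X Y A B)).image (fun ℓ => ⟨{PV.u ℓ}, {PV.v j}⟩))
    have h2 : ((Finset.univ : Finset (Lab X Y A B)).image
        (fun ℓ => (⟨{PV.u ℓ}, {PV.v j}⟩ : Clause (PV X Y A B)))).card ≤ d - 1 := by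
      calc _ ≤ (Finset.univ : Finset (Lab X Y A B)).card := Finset.card_image_le
        _ = Fintype.card X * Fintype.card A + Fintype.card Y * Fintype.card B := by
          simp [Fintype.card_sum, Fintype.card_prod]
        _ = d - 1 := by omega
    have h3 := Finset.card_filter_add_card_filter_not
      (s := Υ) (p := fun C => C.neg = {PV.v j})
    have h4 := Finset.card_filter_le Υ (fun C => C.neg = {PV.v j})
    omega
  exact absurd (hmin Υ' hPH' hrep') (by omega)

end Main2
end Aux6
section Aux7
open Finset
set_option linter.unusedVariables false
set_option linter.unusedSectionVars false
set_option maxHeartbeats 1600000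
variable {X Y A B : Type*} [Fintype X] [Fintype Y] [Fintype A] [Fintype B]
  [DecidableEq X] [DecidableEq Y] [DecidableEq A] [DecidableEq B]
variable {I : LabelCover X Y A B} {d t : ℕ} {Υ : Finset (Clause (PV X Y A B))} {j : ℕ}

section Main3
variable (hPH : IsPureHornCNF Υ)
  (hprime : ∀ C ∈ Υ, PrimeImplicate (hFun I d t) C)
  (hrep : Represents (Υ : Finset (Clause (PV X Y A B))) (hFun I d t))
  (hfeas : ∃ f g, I.IsTotalCover f g)
  (hj1 : 1 ≤ j) (hj2 : j ≤ t)
  (hd : d = 1 + Fintype.card X * Fintype.card A + Fintype.card Y * Fintype.card B)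
  (hmin : ∀ Υ' : Finset (Clause (PV X Y A B)), IsPureHornCNF Υ' →
    Represents Υ' (hFun I d t) → Υ.card ≤ Υ'.card)
include hPH hprime hrep hfeas hj1 hj2 hd hmin

/-- Step 4: every `Y`-vertex has a good label among the extracted `u`-heads. -/
lemma step4 (hnoIsoY : ∀ y : Y, ∃ x, (x, y) ∈ I.E) :
    ∀ y, ∃ b, GoodFor I ↑(UJ Υ j) y b := by
  by_contra hcon
  push_neg at hcon
  obtain ⟨y₀, hbad⟩ := hcon
  set T : Set (PV X Y A B) :=
    ↑(UJ Υ j) ∪ {w | ∃ x y k, y ≠ y₀ ∧ (w = PV.e x y k ∨ ∃ b, w = PV.el x y b k)} ∪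
      {w | ∃ x b k, (PV.u (Sum.inr (y₀, b)) ∈ UJ Υ j ∧
        ∃ a, PV.u (Sum.inl (x, a)) ∈ UJ Υ j ∧ (a, b) ∈ I.cst (x, y₀)) ∧
        w = PV.el x y₀ b k} with hTdef
  have u_in_T : ∀ ℓ : Lab X Y A B, PV.u ℓ ∈ T → PV.u ℓ ∈ UJ Υ j := by
    rintro ℓ ((h | ⟨x, y, k, hy, (h | ⟨b, h⟩)⟩) | ⟨x, b, k, hc, h⟩)
    · exact Finset.mem_coe.1 h
    · exact nomatch h
    · exact nomatch h
    · exact nomatch h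
  have notU : ∀ w : PV X Y A B, w ∈ UJ Υ j → ∀ x y i, w ≠ PV.e x y i ∧
      ∀ b, w ≠ PV.el x y b i := by
    intro w hw x y i
    have := (Finset.mem_filter.1 hw).2
    rcases isU_iff.1 this with ⟨ℓ, rfl⟩
    exact ⟨fun h => (nomatch h), fun b h => nomatch h⟩
  have hclosed : FcClosed (PhiCNF I d t) T := by
    intro C hC w hpos hneg
    rcases mem_PhiCNF_elim hC with ⟨x, y, k, a, b, ⟨hE, hk1, hk2⟩, hab, rfl⟩ |
      ⟨x, y, b, k, ⟨hE, hk1, hk2⟩, rfl⟩ | ⟨x, y, b, k, ⟨hE, hk1, hk2⟩, rfl⟩ |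
      ⟨ℓ, rfl⟩ | ⟨j', ℓ, ⟨hj1', hj2'⟩, rfl⟩ <;>
      simp only [Finset.singleton_inj] at hpos <;> subst hpos
    · -- clause (a)
      have h1 : PV.u (Sum.inl (x, a)) ∈ UJ Υ j := u_in_T _ (hneg (by simp))
      have h2 : PV.u (Sum.inr (y, b)) ∈ UJ Υ j := u_in_T _ (hneg (by simp))
      by_cases hy : y = y₀
      · subst hy
        exact Or.inr ⟨x, b, k, ⟨h2, a, h1, hab⟩, rfl⟩
      · exact Or.inl (Or.inr ⟨x, y, k, hy, Or.inr ⟨b, rfl⟩⟩)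
    · -- clause (b)
      by_cases hy : y = y₀
      · subst hy
        exfalso
        have hel : ∀ z ∈ Nbr I y, (PV.u (Sum.inr (y, b)) ∈ UJ Υ j ∧
            ∃ a, PV.u (Sum.inl (z, a)) ∈ UJ Υ j ∧ (a, b) ∈ I.cst (z, y)) := by
          intro z hz
          have hmem : PV.el z y b k ∈ T := hneg (by
            simp only [Finset.mem_coe, Finset.mem_image]
            exact ⟨z, hz, rfl⟩)
          rcases hmem with (h | ⟨x', y', k', hy', (h | ⟨b', h⟩)⟩) | ⟨x', b', k', hc, h⟩
          · exact absurd rfl ((notU _ (Finset.mem_coe.1 h) z y k).2 b)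
          · exact nomatch h
          · injection h with h1 h2 h3 h4
            exact absurd h2.symm hy'
          · injection h with h1 h2 h3 h4
            subst h1; subst h3
            exact hc
        have hx : x ∈ Nbr I y := mem_Nbr.2 hE
        refine hbad b ⟨Finset.mem_coe.2 (hel x hx).1, fun z hz => ?_⟩
        obtain ⟨-, a, ha, hab⟩ := hel z hz
        exact ⟨a, Finset.mem_coe.2 ha, hab⟩
      · exact Or.inl (Or.inr ⟨x, y, k, hy, Or.inl rfl⟩)
    · -- clause (c)
      have hmem : PV.e x y k ∈ T := hneg (by simp)
      rcases hmem with (h | ⟨x', y', k', hy', (h | ⟨b', h⟩)⟩) | ⟨x', b', k', hc, h⟩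
      · exact absurd rfl ((notU _ (Finset.mem_coe.1 h) x y k).1)
      · injection h with h1 h2 h3
        subst h2
        exact Or.inl (Or.inr ⟨x, y, k, hy', Or.inr ⟨b, rfl⟩⟩)
      · exact nomatch h
      · exact nomatch h
    · -- clause (d)
      exfalso
      obtain ⟨x₀, hx₀⟩ := hnoIsoY y₀
      have hmem : PV.e x₀ y₀ 1 ∈ T := hneg (by
        refine Finset.mem_coe.2 (mem_bigBody_iff.2 ⟨x₀, y₀, 1, hx₀, le_refl 1, by omega, rfl⟩))
      rcases hmem with (h | ⟨x', y', k', hy', (h | ⟨b', h⟩)⟩) | ⟨x', b', k', hc, h⟩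
      · exact absurd rfl ((notU _ (Finset.mem_coe.1 h) x₀ y₀ 1).1)
      · injection h with h1 h2 h3
        exact hy' h2.symm
      · exact nomatch h
      · exact nomatch h
    · -- clause (e)
      exfalso
      have hmem : PV.v j' ∈ T := hneg (by simp)
      rcases hmem with (h | ⟨x', y', k', hy', (h | ⟨b', h⟩)⟩) | ⟨x', b', k', hc, h⟩
      · have := (Finset.mem_filter.1 (Finset.mem_coe.1 h)).2
        simp [isU] at this
      · exact nomatch h
      · exact nomatch h
      · exact nomatch h
  have hsub : fcClosure (PhiCNF I d t) ↑(UJ Υ j) ⊆ T :=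
    fc_min (fun w hw => Or.inl (Or.inl hw)) hclosed
  have hu : ∀ ℓ : Lab X Y A B, PV.u ℓ ∈ (↑(UJ Υ j) : Set (PV X Y A B)) := by
    intro ℓ
    exact Finset.mem_coe.2 (u_in_T ℓ
      (hsub (step3 hPH hprime hrep hfeas hj1 hj2 hd hmin ℓ)))
  obtain ⟨b, hb⟩ := feas_good (I := I) hfeas hu y₀
  exact hbad b hb

/-- The removal lemma: no head of `HJ` can be redundant. -/
lemma remove_clause (w₀ : PV X Y A B) (hw₀ : w₀ ∈ HJ Υ j)
    (hgen : ∀ ℓ : Lab X Y A B,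
      PV.u ℓ ∈ fcClosure (PhiCNF I d t) ↑((HJ Υ j).erase w₀)) : False := by
  classical
  have hC₀ : (⟨{w₀}, {PV.v j}⟩ : Clause (PV X Y A B)) ∈ Υ := (mem_HJ hPH).1 hw₀
  set Υ'' : Finset (Clause (PV X Y A B)) :=
    Υ.erase ⟨{w₀}, {PV.v j}⟩ with hΥ''
  have hsubU : Υ'' ⊆ Υ := Finset.erase_subset _ _
  have hPH'' : IsPureHornCNF Υ'' := fun C hC => hPH C (hsubU hC)
  have hnoV'' : ∀ C ∈ Υ'', ∀ w, C.pos = {w} → ∀ j', w ≠ PV.v j' :=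
    fun C hC w hpos j' => ups_head_not_v hPH hprime hrep (hsubU hC) hpos j'
  have hkeep'' : ∀ C ∈ Υ, C.neg ≠ {PV.v j} → C ∈ Υ'' := by
    intro C hC hn
    refine Finset.mem_erase.2 ⟨?_, hC⟩
    intro heq
    exact hn (by rw [heq])
  have hvnotHJ : PV.v j ∉ ((HJ Υ j).erase w₀ : Finset (PV X Y A B)) := by
    intro h
    exact HJ_hd hPH hprime hrep (Finset.mem_of_mem_erase h)
  have hrep'' : Represents Υ'' (hFun I d t) := by
    refine represents_of_criterion phi_pureHorn hPH'' ?_ ?_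
    · intro C hC
      exact (hprime C (hsubU hC)).2.1
    · intro C hC w hpos
      have hW : w ∈ fcClosure Υ ↑C.neg := by
        refine (implicate_iff_fc hPH hrep C.neg w).1 ?_
        have heta : (⟨{w}, C.neg⟩ : Clause (PV X Y A B)) = C := by
          cases C; simp_all
        rw [heta]
        exact fun a hne ha => hne (ha C hC)
      rcases mem_PhiCNF_elim hC with ⟨x, y, k, a, b, hk, hab, rfl⟩ |
        ⟨x, y, b, k, hk, rfl⟩ | ⟨x, y, b, k, hk, rfl⟩ | ⟨ℓ, rfl⟩ |
        ⟨j', ℓ, ⟨hj1', hj2'⟩, rfl⟩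
      · refine fc_sub_aux hkeep'' hnoV'' _ ?_ hW
        simp
      · refine fc_sub_aux hkeep'' hnoV'' _ ?_ hW
        simp only [Finset.coe_image, Set.mem_image, Finset.mem_coe]
        rintro ⟨z, -, h⟩; exact nomatch h
      · refine fc_sub_aux hkeep'' hnoV'' _ ?_ hW
        simp
      · refine fc_sub_aux hkeep'' hnoV'' _ ?_ hW
        intro h
        rcases mem_bigBody_iff.1 (Finset.mem_coe.1 h) with ⟨_, _, _, _, _, _, h'⟩
        exact nomatch h'
      · by_cases hjj : j' = j
        · cases hjj
          simp only [Finset.singleton_inj] at hpos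
          subst hpos
          -- u ℓ is derivable from {v j} in Υ''
          have hS : (↑((HJ Υ j).erase w₀) : Set (PV X Y A B)) ⊆
              fcClosure Υ'' ↑({PV.v j} : Finset (PV X Y A B)) := by
            intro w' hw'
            obtain ⟨hne, hmem⟩ := Finset.mem_erase.1 (Finset.mem_coe.1 hw')
            have hcl : (⟨{w'}, {PV.v j}⟩ : Clause (PV X Y A B)) ∈ Υ'' := by
              refine Finset.mem_erase.2 ⟨?_, (mem_HJ hPH).1 hmem⟩
              intro heq
              injection heq with h1 h2
              exact hne (Finset.singleton_inj.1 h1)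
            exact fc_fire hcl rfl subset_fc
          have h1 : PV.u ℓ ∈ fcClosure Υ ↑((HJ Υ j).erase w₀) := by
            rw [fc_ups_eq hPH hprime hrep]
            exact hgen ℓ
          have h2 : PV.u ℓ ∈ fcClosure Υ'' ↑((HJ Υ j).erase w₀) :=
            fc_sub_aux hkeep'' hnoV'' _ (fun h => hvnotHJ (Finset.mem_coe.1 h)) h1
          exact fc_trans hS h2
        · refine fc_sub_aux hkeep'' hnoV'' _ ?_ hW
          simp only [Finset.coe_singleton, Set.mem_singleton_iff]
          intro h
          injection h with h'
          exact hjj h'.symm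
  have hcard : Υ''.card < Υ.card := by
    rw [hΥ'', Finset.card_erase_of_mem hC₀]
    have := Finset.card_pos.2 ⟨_, hC₀⟩
    omega
  exact absurd (hmin Υ'' hPH'' hrep'') (by omega)

end Main3
end Aux7
section Final
open Finset
set_option linter.unusedVariables false
set_option linter.unusedSectionVars false
set_option maxHeartbeats 1600000
variable {X Y A B : Type*} [Fintype X] [Fintype Y] [Fintype A] [Fintype B]
  [DecidableEq X] [DecidableEq Y] [DecidableEq A] [DecidableEq B]
variable {I : LabelCover X Y A B} {d t : ℕ} {Υ : Finset (Clause (PV X Y A B))} {j : ℕ}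

lemma mem_fjY_iff (hPH : IsPureHornCNF Υ) {y : Y} {b : B} :
    b ∈ fjY Υ j y ↔ PV.u (Sum.inr (y, b)) ∈ UJ Υ j := by
  rw [fjY, Finset.mem_filter]
  constructor
  · rintro ⟨-, h⟩
    exact Finset.mem_filter.2 ⟨(mem_HJ hPH).2 h, rfl⟩
  · intro h
    exact ⟨Finset.mem_univ _, (mem_HJ hPH).1 (Finset.mem_filter.1 h).1⟩

lemma mem_fjX_iff (hPH : IsPureHornCNF Υ) {x : X} {a : A} :
    a ∈ fjX Υ j x ↔ PV.u (Sum.inl (x, a)) ∈ UJ Υ j := by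
  rw [fjX, Finset.mem_filter]
  constructor
  · rintro ⟨-, h⟩
    exact Finset.mem_filter.2 ⟨(mem_HJ hPH).2 h, rfl⟩
  · intro h
    exact ⟨Finset.mem_univ _, (mem_HJ hPH).1 (Finset.mem_filter.1 h).1⟩

end Final


/-- With `d = 1 + rλ + sλ′`, if `Υ` is a clause minimum prime pure
Horn CNF representation of the canonical function `h`, then for every `j ∈ [t]` the
labeling `f_j` extracted from `Υ` is a tight total-cover of the (refined) Label
Cover instance. -/
theorem fj_is_tight_totalCover
    {X Y A B : Type*} [Fintype X] [Fintype Y] [Fintype A] [Fintype B]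
    [DecidableEq X] [DecidableEq Y] [DecidableEq A] [DecidableEq B]
    [Nonempty X] [Nonempty Y]
    (I : LabelCover X Y A B) (d t : ℕ) (ht : 1 ≤ t)
    (hd : d = 1 + Fintype.card X * Fintype.card A + Fintype.card Y * Fintype.card B)
    (hnoIsoX : ∀ x : X, ∃ y, (x, y) ∈ I.E)
    (hnoIsoY : ∀ y : Y, ∃ x, (x, y) ∈ I.E)
    (hfeas : ∃ f g, I.IsTotalCover f g)
    (Υ : Finset (Clause (PV X Y A B)))
    (hPH : IsPureHornCNF Υ)
    (hprime : ∀ C ∈ Υ, PrimeImplicate (hFun I d t) C)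
    (hrep : Represents Υ (hFun I d t))
    (hmin : ∀ Υ' : Finset (Clause (PV X Y A B)), IsPureHornCNF Υ' →
      Represents Υ' (hFun I d t) → Υ.card ≤ Υ'.card) :
    ∀ j ∈ Finset.Icc 1 t,
      I.IsTotalCover (fjX Υ j) (fjY Υ j) ∧ LabelCover.Tight (fjY Υ j) := by

  classical
  intro j hj
  rw [Finset.mem_Icc] at hj
  obtain ⟨hj1, hj2⟩ := hj
  -- every label assigned to a Y-vertex is good
  have hgood : ∀ y, ∀ b ∈ fjY Υ j y, GoodFor I ↑(UJ Υ j) y b := by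
    intro y b hb
    by_contra hbad
    set w₀ : PV X Y A B := PV.u (Sum.inr (y, b)) with hw₀def
    have hw₀UJ : w₀ ∈ UJ Υ j := (mem_fjY_iff hPH).1 hb
    have hw₀HJ : w₀ ∈ HJ Υ j := (Finset.mem_filter.1 hw₀UJ).1
    refine remove_clause hPH hprime hrep hfeas hj1 hj2 hd hmin w₀ hw₀HJ ?_
    intro ℓ
    refine derive_all_u ?_ ℓ
    intro y' hy'
    obtain ⟨b', hb'⟩ := step4 hPH hprime hrep hfeas hj1 hj2 hd hmin hnoIsoY y'
    have hmemerase : ∀ w : PV X Y A B, w ∈ UJ Υ j → w ≠ w₀ →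
        w ∈ fcClosure (PhiCNF I d t) ↑((HJ Υ j).erase w₀) := by
      intro w hw hne
      exact subset_fc (Finset.mem_coe.2
        (Finset.mem_erase.2 ⟨hne, (Finset.mem_filter.1 hw).1⟩))
    refine ⟨b', hmemerase _ hb'.1 ?_, fun z hz => ?_⟩
    · intro heq
      rw [hw₀def] at heq
      injection heq with h1
      injection h1 with h2
      injection h2 with h3 h4
      subst h3; subst h4
      exact hbad hb'
    · obtain ⟨a, ha, hab⟩ := hb'.2 z hz
      refine ⟨a, hmemerase _ ha ?_, hab⟩
      rw [hw₀def]
      intro heq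
      injection heq with h1
      exact nomatch h1
  -- nonemptiness
  have hne : ∀ y, (fjY Υ j y).Nonempty := by
    intro y
    obtain ⟨b, hb⟩ := step4 hPH hprime hrep hfeas hj1 hj2 hd hmin hnoIsoY y
    exact ⟨b, (mem_fjY_iff hPH).2 (Finset.mem_coe.1 hb.1)⟩
  refine ⟨⟨hne, ?_⟩, ?_⟩
  · -- covering
    rintro ⟨x, y⟩ he b hb
    have hg := hgood y b hb
    obtain ⟨a, ha, hab⟩ := hg.2 x (mem_Nbr.2 he)
    exact ⟨a, (mem_fjX_iff hPH).2 (Finset.mem_coe.1 ha), hab⟩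
  · -- tightness
    intro y
    obtain ⟨b₁, hb₁⟩ := hne y
    rw [Finset.card_eq_one]
    refine ⟨b₁, Finset.eq_singleton_iff_unique_mem.2 ⟨hb₁, fun b₂ hb₂ => ?_⟩⟩
    by_contra hbne
    set w₀ : PV X Y A B := PV.u (Sum.inr (y, b₂)) with hw₀def
    have hw₀UJ : w₀ ∈ UJ Υ j := (mem_fjY_iff hPH).1 hb₂
    have hw₀HJ : w₀ ∈ HJ Υ j := (Finset.mem_filter.1 hw₀UJ).1
    refine remove_clause hPH hprime hrep hfeas hj1 hj2 hd hmin w₀ hw₀HJ ?_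
    intro ℓ
    refine derive_all_u ?_ ℓ
    intro y' hy'
    have hmemerase : ∀ w : PV X Y A B, w ∈ UJ Υ j → w ≠ w₀ →
        w ∈ fcClosure (PhiCNF I d t) ↑((HJ Υ j).erase w₀) := by
      intro w hw hne'
      exact subset_fc (Finset.mem_coe.2
        (Finset.mem_erase.2 ⟨hne', (Finset.mem_filter.1 hw).1⟩))
    by_cases hyy : y' = y
    · subst hyy
      have hg := hgood y' b₁ hb₁
      refine ⟨b₁, hmemerase _ hg.1 ?_, fun z hz => ?_⟩
      · rw [hw₀def]
        intro heq
        injection heq with h1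
        injection h1 with h2
        injection h2 with h3 h4
        exact hbne h4.symm
      · obtain ⟨a, ha, hab⟩ := hg.2 z hz
        refine ⟨a, hmemerase _ ha ?_, hab⟩
        rw [hw₀def]
        intro heq
        injection heq with h1
        exact nomatch h1
    · obtain ⟨b', hb'⟩ := step4 hPH hprime hrep hfeas hj1 hj2 hd hmin hnoIsoY y'
      refine ⟨b', hmemerase _ hb'.1 ?_, fun z hz => ?_⟩
      · rw [hw₀def]
        intro heq
        injection heq with h1
        injection h1 with h2
        injection h2 with h3 h4
        exact hyy h3
      · obtain ⟨a, ha, hab⟩ := hb'.2 z hz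
        refine ⟨a, hmemerase _ ha ?_, hab⟩
        rw [hw₀def]
        intro heq
        injection heq with h1
        exact nomatch h1
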